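/- The lattice √3 ℤ^{12} embeds as a sublattice of D_{12}^+, and the image of D_{12}^+ / √3 ℤ^{12} in the discriminant group (√3 ℤ^{12})^*/(√3 ℤ^{12}) ≅ 𝔽_3^{12} is a self-orthogonal linear subspace of dimension 6 with no nonzero word of weight less than 6 (hence a copy of the extended ternary Golay code). -/
import Mathlib


/-- The standard dot product on `ℝ^m`. -/
def dot {m : ℕ} (x y : Fin m → ℝ) : ℝ := ∑ i, x i * y i

/-- The lattice `D_m ⊂ ℝ^m`: integer vectors with even coordinate sum. -/
def Dset (m : ℕ) : Set (Fin m → ℝ) :=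
  {x | (∀ i, ∃ k : ℤ, x i = (k : ℝ)) ∧ ∃ k : ℤ, (∑ i, x i) = 2 * (k : ℝ)}

/-- `D_m^+ = D_m ∪ (D_m + (1/2,…,1/2))`. -/
def DplusSet (m : ℕ) : Set (Fin m → ℝ) :=
  Dset m ∪ {x | (x - fun _ => (1:ℝ)/2) ∈ Dset m}

namespace S11

def Hz : Fin 12 → Fin 12 → ℤ :=
  ![![1,1,1,1,1,1,1,1,1,1,1,1],
  ![1,-1,1,-1,1,1,1,-1,-1,-1,1,-1],
  ![1,-1,-1,1,-1,1,1,1,-1,-1,-1,1],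
  ![1,1,-1,-1,1,-1,1,1,1,-1,-1,-1],
  ![1,-1,1,-1,-1,1,-1,1,1,1,-1,-1],
  ![1,-1,-1,1,-1,-1,1,-1,1,1,1,-1],
  ![1,-1,-1,-1,1,-1,-1,1,-1,1,1,1],
  ![1,1,-1,-1,-1,1,-1,-1,1,-1,1,1],
  ![1,1,1,-1,-1,-1,1,-1,-1,1,-1,1],
  ![1,1,1,1,-1,-1,-1,1,-1,-1,1,-1],
  ![1,-1,1,1,1,-1,-1,-1,1,-1,-1,1],
  ![1,1,-1,1,1,1,-1,-1,-1,1,-1,-1]]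

def Vz : Fin 6 → Fin 12 → ℤ :=
  ![![4,0,0,1,1,0,2,0,0,0,0,0],
  ![3,2,0,0,1,0,0,0,0,0,0,0],
  ![3,0,2,0,0,1,0,0,0,0,0,0],
  ![6,1,0,2,2,0,1,0,0,0,0,0],
  ![6,1,1,2,1,0,1,0,0,0,0,0],
  ![6,0,1,0,2,2,1,0,0,0,0,0]]

def Nz : Fin 6 → Fin 12 → ℤ :=
  ![![4,3,3,3,0,3,1,0,2,1,2,2],
  ![3,1,0,3,0,0,1,2,2,2,1,3],
  ![3,3,1,0,3,0,0,1,2,2,2,1],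
  ![6,3,3,4,0,3,2,1,2,3,4,5],
  ![6,3,3,3,1,3,1,1,3,4,4,4],
  ![6,6,3,3,3,1,2,2,2,1,3,4]]

def Gm : Fin 6 → Fin 12 → ZMod 3 :=
  ![![1,0,0,0,0,0,1,0,2,1,2,2],
  ![0,1,0,0,0,0,1,2,2,2,1,0],
  ![0,0,1,0,0,0,0,1,2,2,2,1],
  ![0,0,0,1,0,0,2,1,2,0,1,2],
  ![0,0,0,0,1,0,1,1,0,1,1,1],
  ![0,0,0,0,0,1,2,2,2,1,0,1]]

def E : Fin 6 → Fin 12 → ZMod 3 :=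
  ![![1,0,0,0,0,0,0,0,0,0,0,0],
  ![0,1,0,0,0,0,0,0,0,0,0,0],
  ![0,0,1,0,0,0,0,0,0,0,0,0],
  ![0,0,0,1,0,0,0,0,0,0,0,0],
  ![0,0,0,0,1,0,0,0,0,0,0,0],
  ![0,0,0,0,0,1,0,0,0,0,0,0]]

def sv : Fin 6 → ℤ := ![4,3,3,6,6,6]

lemma hH1 : ∀ j i, Hz j i = 1 ∨ Hz j i = -1 := by decide
lemma hHrowsum : ∀ j : Fin 12, (∑ i, Hz j i) = if j = 0 then 12 else 0 := by decide
lemma hHrow : ∀ i j, (∑ k, Hz i k * Hz j k) = if i = j then 12 else 0 := by decide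
lemma hHcol : ∀ i j, (∑ k, Hz k i * Hz k j) = if i = j then 12 else 0 := by decide
lemma hN2 : ∀ k j, 2 * Nz k j = ∑ i, Vz k i * Hz j i := by decide
lemma hNG : ∀ k j, ((Nz k j : ZMod 3)) = Gm k j := by decide
lemma hVsum : ∀ k, (∑ i, Vz k i) = 2 * sv k := by decide
lemma hGorth : ∀ k k', (∑ j, Gm k j * Gm k' j) = 0 := by decide
lemma hGE : ∀ l k, (∑ j, Gm k j * E l j) = if l = k then 1 else 0 := by decide

set_option maxRecDepth 100000 in
set_option maxHeartbeats 4000000 in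
lemma hGli : ∀ g : Fin 6 → ZMod 3, (∑ i, g i • Gm i) = 0 → ∀ i, g i = 0 := by decide

set_option maxRecDepth 100000 in
set_option maxHeartbeats 4000000 in
lemma hGwt : ∀ a : Fin 6 → ZMod 3, (fun j => ∑ k, a k * Gm k j) ≠ (0 : Fin 12 → ZMod 3) →
    6 ≤ (Finset.univ.filter fun j => (∑ k, a k * Gm k j) ≠ 0).card := by decide

noncomputable def lamf : Fin 12 → Fin 12 → ℝ := fun j i => (Hz j i : ℝ)/2

lemma dotA (w : Fin 12 → ℤ) (j : Fin 12) :
    dot (fun i => (w i : ℝ)) (lamf j) = ((∑ i, w i * Hz j i : ℤ) : ℝ)/2 := by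
  simp only [dot, lamf]
  push_cast
  rw [Finset.sum_div]
  exact Finset.sum_congr rfl fun i _ => by ring

lemma lam_orth : ∀ i j, dot (lamf i) (lamf j) = if i = j then 3 else 0 := by
  intro i j
  have h1 : dot (lamf i) (lamf j) = ((∑ k, Hz i k * Hz j k : ℤ) : ℝ)/4 := by
    simp only [dot, lamf]
    push_cast
    rw [Finset.sum_div]
    exact Finset.sum_congr rfl fun k _ => by ring
  rw [h1, hHrow i j]
  split <;> norm_num

lemma lam_col (i i' : Fin 12) : (∑ j, lamf j i * lamf j i') = if i = i' then (3:ℝ) else 0 := by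
  have h1 : (∑ j, lamf j i * lamf j i') = ((∑ j, Hz j i * Hz j i' : ℤ) : ℝ)/4 := by
    simp only [lamf]
    push_cast
    rw [Finset.sum_div]
    exact Finset.sum_congr rfl fun k _ => by ring
  rw [h1, hHcol i i']
  split <;> norm_num

lemma lam_mem : ∀ j, lamf j ∈ DplusSet 12 := by
  intro j
  right
  have happ : ∀ i, ((lamf j - fun _ => (1:ℝ)/2) : Fin 12 → ℝ) i = (Hz j i : ℝ)/2 - 1/2 := fun i => rfl
  constructor
  · intro i
    rcases hH1 j i with h | h
    · refine ⟨0, ?_⟩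
      rw [happ i, h]
      norm_num
    · refine ⟨-1, ?_⟩
      rw [happ i, h]
      norm_num
  · have hs : (∑ i, ((lamf j - fun _ => (1:ℝ)/2) : Fin 12 → ℝ) i) = ((∑ i, Hz j i : ℤ) : ℝ)/2 - 6 := by
      rw [Finset.sum_congr rfl fun i _ => happ i]
      push_cast
      rw [Finset.sum_sub_distrib, Finset.sum_div]
      norm_num
    by_cases h : j = 0
    · refine ⟨0, ?_⟩
      rw [hs, hHrowsum j, if_pos h]
      norm_num
    · refine ⟨-3, ?_⟩
      rw [hs, hHrowsum j, if_neg h]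
      norm_num

lemma parseval (x v : Fin 12 → ℝ) :
    (∑ j, dot x (lamf j) * dot v (lamf j)) = 3 * dot x v := by
  have step : ∀ j, dot x (lamf j) * dot v (lamf j)
      = ∑ i, ∑ i', (x i * v i') * (lamf j i * lamf j i') := by
    intro j
    rw [dot, dot, Finset.sum_mul_sum]
    exact Finset.sum_congr rfl fun i _ => Finset.sum_congr rfl fun i' _ => by ring
  calc (∑ j, dot x (lamf j) * dot v (lamf j))
      = ∑ j, ∑ i, ∑ i', (x i * v i') * (lamf j i * lamf j i') :=
        Finset.sum_congr rfl fun j _ => step j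
    _ = ∑ i, ∑ i', ∑ j, (x i * v i') * (lamf j i * lamf j i') := by
        rw [Finset.sum_comm]
        exact Finset.sum_congr rfl fun i _ => Finset.sum_comm
    _ = ∑ i, ∑ i', (x i * v i') * (if i = i' then (3:ℝ) else 0) := by
        refine Finset.sum_congr rfl fun i _ => Finset.sum_congr rfl fun i' _ => ?_
        rw [← Finset.mul_sum, lam_col]
    _ = ∑ i, (x i * v i) * 3 := by
        refine Finset.sum_congr rfl fun i _ => ?_
        simp [mul_ite, Finset.sum_ite_eq]
    _ = 3 * dot x v := by
        rw [dot, Finset.mul_sum]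
        exact Finset.sum_congr rfl fun i _ => by ring

noncomputable def psi : (Fin 12 → ZMod 3) →ₗ[ZMod 3] (Fin 6 → ZMod 3) where
  toFun c := fun k => ∑ j, Gm k j * c j
  map_add' a b := by
    funext k
    simp [mul_add, Finset.sum_add_distrib]
  map_smul' r a := by
    funext k
    simp [Finset.mul_sum, mul_left_comm]

lemma psi_surj : Function.Surjective psi := by
  intro y
  refine ⟨fun j => ∑ l, y l * E l j, ?_⟩
  funext k
  show (∑ j, Gm k j * ∑ l, y l * E l j) = y k
  have h1 : ∀ j, Gm k j * (∑ l, y l * E l j) = ∑ l, y l * (Gm k j * E l j) := by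
    intro j
    rw [Finset.mul_sum]
    exact Finset.sum_congr rfl fun l _ => by ring
  rw [Finset.sum_congr rfl fun j _ => h1 j, Finset.sum_comm]
  have h2 : ∀ l, (∑ j, y l * (Gm k j * E l j)) = y l * (if l = k then 1 else 0) := by
    intro l
    rw [← Finset.mul_sum, hGE l k]
  rw [Finset.sum_congr rfl fun l _ => h2 l]
  simp [Finset.sum_ite_eq']

/-- the glue set from the theorem statement. -/
def glueSet : Set (Fin 12 → ZMod 3) :=
  {c | ∃ x ∈ DplusSet 12, ∀ j, ∃ m : ℤ, dot x (lamf j) = (m : ℝ) ∧ (m : ZMod 3) = c j}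

lemma dot_int (x : Fin 12 → ℝ) (hx : x ∈ DplusSet 12) (k : Fin 6) :
    ∃ p : ℤ, dot x (fun i => (Vz k i : ℝ)) = (p : ℝ) := by
  rcases hx with ⟨h1, -⟩ | ⟨h1, -⟩
  · refine ⟨∑ i, (h1 i).choose * Vz k i, ?_⟩
    rw [dot]
    push_cast
    exact Finset.sum_congr rfl fun i _ =>
      congrArg (fun t => t * ((Vz k i : ℤ) : ℝ)) (h1 i).choose_spec
  · refine ⟨(∑ i, (h1 i).choose * Vz k i) + sv k, ?_⟩
    have hx' : ∀ i, x i = ((h1 i).choose : ℝ) + 1/2 := by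
      intro i
      have h := (h1 i).choose_spec
      have h' : x i - 1/2 = ((h1 i).choose : ℝ) := h
      linarith
    have hsum : (∑ i, ((Vz k i : ℝ))) = 2 * (sv k : ℝ) := by
      have := hVsum k
      have h2 : ((∑ i, Vz k i : ℤ) : ℝ) = 2 * ((sv k : ℤ) : ℝ) := by
        rw [this]
        push_cast
        ring
      push_cast at h2
      exact h2
    rw [dot]
    have hstep : (∑ i, x i * (Vz k i : ℝ))
        = (∑ i, ((h1 i).choose : ℝ) * (Vz k i : ℝ)) + (∑ i, ((Vz k i : ℝ)))/2 := by
      rw [Finset.sum_div, ← Finset.sum_add_distrib]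
      refine Finset.sum_congr rfl fun i _ => ?_
      have := hx' i
      linear_combination (Vz k i : ℝ) * this
    rw [hstep, hsum]
    push_cast
    ring

lemma glue_mem_ker {c : Fin 12 → ZMod 3} (hc : c ∈ glueSet) : psi c = 0 := by
  obtain ⟨x, hx, hm⟩ := hc
  choose m hm1 hm2 using hm
  funext k
  obtain ⟨p, hp⟩ := dot_int x hx k
  have hdotv : ∀ j, dot (fun i => (Vz k i : ℝ)) (lamf j) = (Nz k j : ℝ) := by
    intro j
    rw [dotA, ← hN2 k j]
    push_cast
    ring
  have hreal : (∑ j, (m j : ℝ) * (Nz k j : ℝ)) = 3 * (p : ℝ) := by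
    calc (∑ j, (m j : ℝ) * (Nz k j : ℝ))
        = ∑ j, dot x (lamf j) * dot (fun i => (Vz k i : ℝ)) (lamf j) :=
          Finset.sum_congr rfl fun j _ => by rw [hm1 j, hdotv j]
      _ = 3 * dot x (fun i => (Vz k i : ℝ)) := parseval _ _
      _ = 3 * (p : ℝ) := by rw [hp]
  have hint : (∑ j, m j * Nz k j) = 3 * p := by exact_mod_cast hreal
  have hz : ((∑ j, m j * Nz k j : ℤ) : ZMod 3) = 0 := by
    rw [hint]
    push_cast
    rw [show ((3 : ZMod 3)) = 0 by decide]
    ring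
  push_cast at hz
  show (∑ j, Gm k j * c j) = 0
  rw [← hz]
  exact Finset.sum_congr rfl fun j _ => by rw [← hm2 j, ← hNG k j]; ring

lemma span_mem_glue {c : Fin 12 → ZMod 3}
    (hc : c ∈ Submodule.span (ZMod 3) (Set.range Gm)) : c ∈ glueSet := by
  obtain ⟨a, ha⟩ := (Submodule.mem_span_range_iff_exists_fun (ZMod 3)).mp hc
  set w : Fin 12 → ℤ := fun i => ∑ k, ((a k).val : ℤ) * Vz k i with hw
  refine ⟨fun i => (w i : ℝ), Or.inl ⟨fun i => ⟨w i, rfl⟩, ⟨∑ k, ((a k).val : ℤ) * sv k, ?_⟩⟩, ?_⟩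
  · have hint : (∑ i, w i) = 2 * ∑ k, ((a k).val : ℤ) * sv k := by
      rw [hw]
      rw [Finset.sum_comm]
      rw [Finset.mul_sum]
      refine Finset.sum_congr rfl fun k _ => ?_
      rw [← Finset.mul_sum, hVsum k]
      ring
    have hc2 : (∑ i, ((w i : ℤ) : ℝ)) = ((∑ i, w i : ℤ) : ℝ) := by push_cast; rfl
    rw [hc2, hint]
    push_cast
    ring
  · intro j
    refine ⟨∑ k, ((a k).val : ℤ) * Nz k j, ?_, ?_⟩
    · rw [dotA]
      have h2 : (∑ i, w i * Hz j i) = 2 * ∑ k, ((a k).val : ℤ) * Nz k j := by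
        have : ∀ i, w i * Hz j i = ∑ k, ((a k).val : ℤ) * (Vz k i * Hz j i) := by
          intro i
          rw [hw, Finset.sum_mul]
          exact Finset.sum_congr rfl fun k _ => by ring
        rw [Finset.sum_congr rfl fun i _ => this i, Finset.sum_comm, Finset.mul_sum]
        refine Finset.sum_congr rfl fun k _ => ?_
        rw [← Finset.mul_sum, ← hN2 k j]
        ring
      rw [h2]
      push_cast
      ring
    · push_cast
      have hck : ∀ k : Fin 6, (((a k).val : ℕ) : ZMod 3) = a k := by
        intro k
        rw [ZMod.natCast_val, ZMod.cast_id]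
      have hcj : c j = ∑ k, a k * Gm k j := by
        rw [← ha]
        simp [Finset.sum_apply]
      rw [hcj]
      refine Finset.sum_congr rfl fun k _ => ?_
      rw [hck k, hNG k j]

end S11

theorem stmt_11 :
    ∃ lam : Fin 12 → (Fin 12 → ℝ),
      (∀ i, lam i ∈ DplusSet 12) ∧
      (∀ i j, dot (lam i) (lam j) = if i = j then 3 else 0) ∧
      ∃ M : Submodule (ZMod 3) (Fin 12 → ZMod 3),
        (M : Set (Fin 12 → ZMod 3)) = {c | ∃ x ∈ DplusSet 12,
          ∀ j, ∃ m : ℤ, dot x (lam j) = (m : ℝ) ∧ (m : ZMod 3) = c j} ∧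
        Module.finrank (ZMod 3) M = 6 ∧
        (∀ c ∈ M, ∀ d ∈ M, (∑ i, c i * d i) = 0) ∧
        (∀ c ∈ M, c ≠ 0 → 6 ≤ (Finset.univ.filter fun i => c i ≠ 0).card) := by
  classical
  haveI : Fact (Nat.Prime 3) := ⟨by norm_num⟩
  have hle : Submodule.span (ZMod 3) (Set.range S11.Gm) ≤ LinearMap.ker S11.psi := by
    rw [Submodule.span_le]
    rintro _ ⟨k', rfl⟩
    rw [SetLike.mem_coe, LinearMap.mem_ker]
    funext k
    exact S11.hGorth k k'
  have hrk_ker : Module.finrank (ZMod 3) (LinearMap.ker S11.psi) = 6 := by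
    have h := LinearMap.finrank_range_add_finrank_ker S11.psi
    rw [LinearMap.range_eq_top.mpr S11.psi_surj, finrank_top] at h
    simp [Module.finrank_pi] at h
    omega
  have hli : LinearIndependent (ZMod 3) S11.Gm := by
    rw [Fintype.linearIndependent_iff]
    exact S11.hGli
  have hrk_span : Module.finrank (ZMod 3)
      (Submodule.span (ZMod 3) (Set.range S11.Gm)) = 6 := by
    rw [finrank_span_eq_card hli]
    simp
  have hEq : Submodule.span (ZMod 3) (Set.range S11.Gm) = LinearMap.ker S11.psi :=
    Submodule.eq_of_le_of_finrank_le hle (by rw [hrk_ker, hrk_span])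
  refine ⟨S11.lamf, S11.lam_mem, S11.lam_orth,
    Submodule.span (ZMod 3) (Set.range S11.Gm), ?_, hrk_span, ?_, ?_⟩
  · -- set equality
    apply Set.ext
    intro c
    constructor
    · intro hcm
      exact S11.span_mem_glue hcm
    · intro hcg
      rw [SetLike.mem_coe, hEq, LinearMap.mem_ker]
      exact S11.glue_mem_ker hcg
  · -- self orthogonality
    intro c hcM d hdM
    obtain ⟨a, ha⟩ := (Submodule.mem_span_range_iff_exists_fun (ZMod 3)).mp hcM
    have hd0 : S11.psi d = 0 := by
      rw [hEq] at hdM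
      exact LinearMap.mem_ker.mp hdM
    have hci : ∀ i, c i = ∑ k, a k * S11.Gm k i := by
      intro i
      rw [← ha]
      simp
    have h1 : ∀ i, c i * d i = ∑ k, a k * (S11.Gm k i * d i) := by
      intro i
      rw [hci i, Finset.sum_mul]
      exact Finset.sum_congr rfl fun k _ => by ring
    rw [Finset.sum_congr rfl fun i _ => h1 i, Finset.sum_comm]
    have h2 : ∀ k, (∑ i, a k * (S11.Gm k i * d i)) = a k * (S11.psi d k) := by
      intro k
      rw [← Finset.mul_sum]
      rfl
    rw [Finset.sum_congr rfl fun k _ => h2 k, hd0]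
    simp
  · -- minimum weight
    intro c hcM hc0
    obtain ⟨a, ha⟩ := (Submodule.mem_span_range_iff_exists_fun (ZMod 3)).mp hcM
    have hcf : c = fun j => ∑ k, a k * S11.Gm k j := by
      funext j
      rw [← ha]
      simp
    have hne : (fun j => ∑ k, a k * S11.Gm k j) ≠ (0 : Fin 12 → ZMod 3) := by
      rw [← hcf]
      exact hc0
    have hw := S11.hGwt a hne
    refine le_trans hw (le_of_eq ?_)
    congr 1
    apply Finset.filter_congr
    intro j _
    rw [hcf]
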